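/- For the 4-ary relation R = {0000, 0100, 1100, 0011, 1011}, each of the two connected components {0000,0100,1100} and {0011,1011} of its solution graph is closed under the coordinate-wise majority operation MAJ, but the 3-ary relation R' = {000,010,110,001,101} obtained from R by identifying the third and fourth variables has a connected component that is not closed under MAJ (indeed MAJ(110,000,101) = 100 ∉ R'). -/
import Mathlib


def maj (x y z : Bool) : Bool := (x || y) && (y || z) && (z || x)

/-- Reachability in the solution graph of `S`: steps between elements of `S`
at Hamming distance 1. -/
def Reach {ι : Type*} [Fintype ι] (S : Set (ι → Bool)) : (ι → Bool) → (ι → Bool) → Prop :=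
  Relation.ReflTransGen (fun u v => u ∈ S ∧ v ∈ S ∧ hammingDist u v = 1)

theorem componentwise_maj_not_preserved_by_identification :
    let S1 : Set (Fin 4 → Bool) :=
      {![false,false,false,false], ![false,true,false,false], ![true,true,false,false]}
    let S2 : Set (Fin 4 → Bool) :=
      {![false,false,true,true], ![true,false,true,true]}
    let R : Set (Fin 4 → Bool) := S1 ∪ S2
    let R' : Set (Fin 3 → Bool) := {p | (![p 0, p 1, p 2, p 2] : Fin 4 → Bool) ∈ R}
    -- S1 and S2 are the connected components of G(R):
    ((∀ a ∈ S1, ∀ b ∈ S1, Reach R a b) ∧ (∀ a ∈ S2, ∀ b ∈ S2, Reach R a b) ∧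
      (∀ a ∈ S1, ∀ b ∈ S2, ¬ Reach R a b)) ∧
    -- each component is closed under coordinate-wise MAJ:
    ((∀ a ∈ S1, ∀ b ∈ S1, ∀ c ∈ S1, (fun i => maj (a i) (b i) (c i)) ∈ S1) ∧
      (∀ a ∈ S2, ∀ b ∈ S2, ∀ c ∈ S2, (fun i => maj (a i) (b i) (c i)) ∈ S2)) ∧
    -- but R' has a connected component (containing 110, 000, 101) not closed under MAJ:
    ((![true,true,false] : Fin 3 → Bool) ∈ R' ∧ (![false,false,false] : Fin 3 → Bool) ∈ R' ∧
      (![true,false,true] : Fin 3 → Bool) ∈ R' ∧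
      Reach R' ![true,true,false] ![false,false,false] ∧
      Reach R' ![false,false,false] ![true,false,true] ∧
      (fun i => maj ((![true,true,false] : Fin 3 → Bool) i)
        ((![false,false,false] : Fin 3 → Bool) i)
        ((![true,false,true] : Fin 3 → Bool) i)) ∉ R') := by
  intro S1 S2 R R'
  have m1 : ∀ v ∈ S1, v ∈ R := fun v h => Or.inl h
  have m2 : ∀ v ∈ S2, v ∈ R := fun v h => Or.inr h
  have hR : ∀ v ∈ R, v = ![false,false,false,false] ∨ v = ![false,true,false,false] ∨
      v = ![true,true,false,false] ∨ v = ![false,false,true,true] ∨ v = ![true,false,true,true] := by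
    intro v hv
    simp only [R, S1, S2, Set.mem_union, Set.mem_insert_iff, Set.mem_singleton_iff] at hv
    tauto
  -- invariant: steps preserve coordinate 2
  have hstep : ∀ u v : Fin 4 → Bool, u ∈ R → v ∈ R → hammingDist u v = 1 → u 2 = v 2 := by
    intro u v hu hv hd
    rcases hR u hu with rfl|rfl|rfl|rfl|rfl <;>
      rcases hR v hv with rfl|rfl|rfl|rfl|rfl <;> revert hd <;> decide
  have hinv : ∀ u v : Fin 4 → Bool, Reach R u v → u 2 = v 2 := by
    intro u v h
    induction h with
    | refl => rfl
    | tail _ hs ih => exact ih.trans (hstep _ _ hs.1 hs.2.1 hs.2.2)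
  have step1 : Reach R ![false,false,false,false] ![false,true,false,false] :=
    Relation.ReflTransGen.single ⟨m1 _ (by left; rfl), m1 _ (by right; left; rfl), by decide⟩
  have step2 : Reach R ![false,true,false,false] ![true,true,false,false] :=
    Relation.ReflTransGen.single ⟨m1 _ (by right; left; rfl), m1 _ (by right; right; rfl), by decide⟩
  have step1' : Reach R ![false,true,false,false] ![false,false,false,false] :=
    Relation.ReflTransGen.single ⟨m1 _ (by right; left; rfl), m1 _ (by left; rfl), by decide⟩
  have step2' : Reach R ![true,true,false,false] ![false,true,false,false] :=
    Relation.ReflTransGen.single ⟨m1 _ (by right; right; rfl), m1 _ (by right; left; rfl), by decide⟩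
  have stepA : Reach R ![false,false,true,true] ![true,false,true,true] :=
    Relation.ReflTransGen.single ⟨m2 _ (by left; rfl), m2 _ (by right; rfl), by decide⟩
  have stepA' : Reach R ![true,false,true,true] ![false,false,true,true] :=
    Relation.ReflTransGen.single ⟨m2 _ (by right; rfl), m2 _ (by left; rfl), by decide⟩
  -- memberships in R'
  have h110 : (![true,true,false] : Fin 3 → Bool) ∈ R' :=
    show (![true,true,false,false] : Fin 4 → Bool) ∈ R from Or.inl (by right; right; rfl)
  have h010 : (![false,true,false] : Fin 3 → Bool) ∈ R' :=
    show (![false,true,false,false] : Fin 4 → Bool) ∈ R from Or.inl (by right; left; rfl)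
  have h000 : (![false,false,false] : Fin 3 → Bool) ∈ R' :=
    show (![false,false,false,false] : Fin 4 → Bool) ∈ R from Or.inl (by left; rfl)
  have h001 : (![false,false,true] : Fin 3 → Bool) ∈ R' :=
    show (![false,false,true,true] : Fin 4 → Bool) ∈ R from Or.inr (by left; rfl)
  have h101 : (![true,false,true] : Fin 3 → Bool) ∈ R' :=
    show (![true,false,true,true] : Fin 4 → Bool) ∈ R from Or.inr (by right; rfl)
  refine ⟨⟨?_, ?_, ?_⟩, ⟨?_, ?_⟩, ?_, ?_, ?_, ?_, ?_, ?_⟩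
  · intro a ha b hb
    rcases ha with rfl|rfl|rfl <;> rcases hb with rfl|rfl|rfl
    · exact .refl
    · exact step1
    · exact step1.trans step2
    · exact step1'
    · exact .refl
    · exact step2
    · exact step2'.trans step1'
    · exact step2'
    · exact .refl
  · intro a ha b hb
    rcases ha with rfl|rfl <;> rcases hb with rfl|rfl
    · exact .refl
    · exact stepA
    · exact stepA'
    · exact .refl
  · intro a ha b hb hr
    have := hinv _ _ hr
    rcases ha with rfl|rfl|rfl <;> rcases hb with rfl|rfl <;> simp_all
  · intro a ha b hb c hc
    rcases ha with rfl|rfl|rfl <;> rcases hb with rfl|rfl|rfl <;> rcases hc with rfl|rfl|rfl <;>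
      simp only [S1, Set.mem_insert_iff, Set.mem_singleton_iff] <;>
      first
        | (left; funext i; fin_cases i <;> rfl)
        | (right; left; funext i; fin_cases i <;> rfl)
        | (right; right; funext i; fin_cases i <;> rfl)
  · intro a ha b hb c hc
    rcases ha with rfl|rfl <;> rcases hb with rfl|rfl <;> rcases hc with rfl|rfl <;>
      simp only [S2, Set.mem_insert_iff, Set.mem_singleton_iff] <;>
      first
        | (left; funext i; fin_cases i <;> rfl)
        | (right; funext i; fin_cases i <;> rfl)
  · exact h110
  · exact h000
  · exact h101
  · exact (Relation.ReflTransGen.single ⟨h110, h010, by decide⟩).trans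
      (Relation.ReflTransGen.single ⟨h010, h000, by decide⟩)
  · exact (Relation.ReflTransGen.single ⟨h000, h001, by decide⟩).trans
      (Relation.ReflTransGen.single ⟨h001, h101, by decide⟩)
  · intro h
    exact absurd (hR _ h) (by decide)
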